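/- Let γ : [a,b] → M (the affine group, x₁ > 0) be a C² regular curve and for L > 0 set ‖γ̇‖_L² = (γ̇₁/γ₁)² + γ̇₃² + L ω(γ̇(t))², where ω(γ̇(t)) = γ̇₂/γ₁ − γ̇₃. Then lim_{L→∞} (1/√L) ∫_a^b ‖γ̇(t)‖_L dt = ∫_a^b |ω(γ̇(t))| dt. -/

import Mathlib

open Filter MeasureTheory

theorem affine_length_limit
    (a b : ℝ) (hab : a ≤ b)
    (γ₁ γ₂ γ₃ : ℝ → ℝ)
    (h₁ : ContDiff ℝ 2 γ₁) (h₂ : ContDiff ℝ 2 γ₂) (h₃ : ContDiff ℝ 2 γ₃)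
    (hpos : ∀ t ∈ Set.Icc a b, 0 < γ₁ t)
    (hreg : ∀ t ∈ Set.Icc a b, (deriv γ₁ t, deriv γ₂ t, deriv γ₃ t) ≠ (0, 0, 0)) :
    Tendsto
      (fun L : ℝ => (1 / Real.sqrt L) *
        ∫ t in a..b,
          Real.sqrt ((deriv γ₁ t / γ₁ t) ^ 2 + (deriv γ₃ t) ^ 2 +
            L * (deriv γ₂ t / γ₁ t - deriv γ₃ t) ^ 2))
      atTop
      (nhds (∫ t in a..b, |deriv γ₂ t / γ₁ t - deriv γ₃ t|)) := by
  set A : ℝ → ℝ := fun t => (deriv γ₁ t / γ₁ t) ^ 2 + (deriv γ₃ t) ^ 2 with hA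
  set W : ℝ → ℝ := fun t => deriv γ₂ t / γ₁ t - deriv γ₃ t with hWdef
  have hd1 : Continuous (deriv γ₁) := (h₁.iterate_deriv' 1 1).continuous
  have hd2 : Continuous (deriv γ₂) := (h₂.iterate_deriv' 1 1).continuous
  have hd3 : Continuous (deriv γ₃) := (h₃.iterate_deriv' 1 1).continuous
  have hne : ∀ t ∈ Set.Icc a b, γ₁ t ≠ 0 := fun t ht => (hpos t ht).ne'
  have hAcont : ContinuousOn A (Set.Icc a b) := by
    apply ContinuousOn.add
    · exact ((hd1.continuousOn.div h₁.continuous.continuousOn hne).pow 2)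
    · exact (hd3.continuousOn.pow 2)
  have hWcont : ContinuousOn W (Set.Icc a b) := by
    exact (hd2.continuousOn.div h₁.continuous.continuousOn hne).sub hd3.continuousOn
  have hAnn : ∀ t, 0 ≤ A t := fun t => by positivity
  -- the dominating function
  have hgcont : ContinuousOn (fun t => Real.sqrt (A t + W t ^ 2)) (Set.Icc a b) :=
    (hAcont.add (hWcont.pow 2)).sqrt
  have hmeasIoc : MeasurableSet (Set.Ioc a b) := measurableSet_Ioc
  have hIoc_sub : Set.Ioc a b ⊆ Set.Icc a b := Set.Ioc_subset_Icc_self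
  have hginteg : IntegrableOn (fun t => Real.sqrt (A t + W t ^ 2)) (Set.Ioc a b) :=
    (hgcont.integrableOn_Icc).mono_set hIoc_sub
  -- main convergence
  have key : Tendsto (fun L : ℝ => ∫ t in Set.Ioc a b, Real.sqrt (A t / L + W t ^ 2))
      atTop (nhds (∫ t in Set.Ioc a b, |W t|)) := by
    apply tendsto_integral_filter_of_dominated_convergence
      (fun t => Real.sqrt (A t + W t ^ 2))
    · filter_upwards [eventually_ge_atTop (1 : ℝ)] with L hL
      have : ContinuousOn (fun t => Real.sqrt (A t / L + W t ^ 2)) (Set.Icc a b) :=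
        ((hAcont.div_const L).add (hWcont.pow 2)).sqrt
      exact (this.mono hIoc_sub).aestronglyMeasurable hmeasIoc
    · filter_upwards [eventually_ge_atTop (1 : ℝ)] with L hL
      refine Eventually.of_forall fun t => ?_
      have h0 : 0 ≤ A t / L := div_nonneg (hAnn t) (by linarith)
      rw [Real.norm_eq_abs, abs_of_nonneg (Real.sqrt_nonneg _)]
      apply Real.sqrt_le_sqrt
      have : A t / L ≤ A t := div_le_self (hAnn t) hL
      linarith
    · exact hginteg
    · refine Eventually.of_forall fun t => ?_
      have h1 : Tendsto (fun L : ℝ => A t / L + W t ^ 2) atTop (nhds (0 + W t ^ 2)) :=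
        (tendsto_const_nhds.div_atTop tendsto_id).add tendsto_const_nhds
      have h2 := (Real.continuous_sqrt.tendsto _).comp h1
      simpa [Function.comp_def, Real.sqrt_sq_eq_abs] using h2
  have heq : ∀ᶠ L : ℝ in atTop,
      (1 / Real.sqrt L) * ∫ t in a..b, Real.sqrt (A t + L * W t ^ 2)
        = ∫ t in Set.Ioc a b, Real.sqrt (A t / L + W t ^ 2) := by
    filter_upwards [eventually_gt_atTop (0 : ℝ)] with L hL
    have hLne : L ≠ 0 := hL.ne'
    rw [intervalIntegral.integral_of_le hab, ← integral_const_mul]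
    apply integral_congr_ae
    refine Eventually.of_forall fun t => ?_
    have h1 : (1 : ℝ) / Real.sqrt L = Real.sqrt (1 / L) := by
      rw [one_div, one_div, Real.sqrt_inv]
    rw [h1]
    show Real.sqrt (1 / L) * Real.sqrt (A t + L * W t ^ 2)
        = Real.sqrt (A t / L + W t ^ 2)
    rw [← Real.sqrt_mul (by positivity : (0:ℝ) ≤ 1 / L)]
    congr 1
    field_simp
  rw [intervalIntegral.integral_of_le hab]
  exact Tendsto.congr' (heq.mono fun L h => h.symm) key
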